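/- arXiv:1601.05106 — 5 statements merged into one kernel-verified Lean document; each statement's English description precedes it below -/
import Mathlib

section
/- Right-hand substitution for sorting: if Γ ⊢ t : κ under an algorithmic context Γ, then Γ ⊢ [Γ]t : κ, where [Γ]t applies the context Γ as a substitution (replacing solved existential variables by their solutions and equated universal variables by their equations). -/
/-- Sorts κ ∈ {⋆, ℕ}. -/
inductive Srt : Type
  | star
  | nat
  deriving DecidableEq

/-- Algorithmic types and index terms, with named universal variables `var`
and existential variables `evar`. -/
inductive Ty : Type
  | unit
  | var (x : ℕ)
  | evar (a : ℕ)
  | zero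
  | succ (t : Ty)
  | arrow (A B : Ty)
  | sum (A B : Ty)
  | prod (A B : Ty)
  | all (x : ℕ) (κ : Srt) (A : Ty)
  | ex (x : ℕ) (κ : Srt) (A : Ty)
  | impl (t u : Ty) (A : Ty)
  | wth (A : Ty) (t u : Ty)
  deriving DecidableEq

namespace Ty

/-- Substitution `[τ/α]` for a universal variable. -/
def subst (τ : Ty) (α : ℕ) : Ty → Ty
  | unit => unit
  | var x => if x = α then τ else var x
  | evar a => evar a
  | zero => zero
  | succ t => succ (subst τ α t)
  | arrow A B => arrow (subst τ α A) (subst τ α B)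
  | sum A B => sum (subst τ α A) (subst τ α B)
  | prod A B => prod (subst τ α A) (subst τ α B)
  | all x κ A => all x κ (if x = α then A else subst τ α A)
  | ex x κ A => ex x κ (if x = α then A else subst τ α A)
  | impl t u A => impl (subst τ α t) (subst τ α u) (subst τ α A)
  | wth A t u => wth (subst τ α A) (subst τ α t) (subst τ α u)

/-- Substitution `[τ/α̂]` for an existential variable. -/
def substE (τ : Ty) (a : ℕ) : Ty → Ty
  | unit => unit
  | var x => var x
  | evar b => if b = a then τ else evar b
  | zero => zero
  | succ t => succ (substE τ a t)
  | arrow A B => arrow (substE τ a A) (substE τ a B)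
  | sum A B => sum (substE τ a A) (substE τ a B)
  | prod A B => prod (substE τ a A) (substE τ a B)
  | all x κ A => all x κ (substE τ a A)
  | ex x κ A => ex x κ (substE τ a A)
  | impl t u A => impl (substE τ a t) (substE τ a u) (substE τ a A)
  | wth A t u => wth (substE τ a A) (substE τ a t) (substE τ a u)

/-- The free existential variables of a type. -/
def fev : Ty → List ℕ
  | unit => []
  | var _ => []
  | evar a => [a]
  | zero => []
  | succ t => fev t
  | arrow A B => fev A ++ fev B
  | sum A B => fev A ++ fev B
  | prod A B => fev A ++ fev B
  | all _ _ A => fev A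
  | ex _ _ A => fev A
  | impl t u A => fev t ++ fev u ++ fev A
  | wth A t u => fev A ++ fev t ++ fev u

end Ty

/-- Entries of an algorithmic context: universal variable declarations `α:κ`,
term variable declarations `x:A`, unsolved existentials `α̂:κ`, solved
existentials `α̂:κ = τ`, equations `α = τ`, and markers `►α̂`. -/
inductive CtxEntry : Type
  | uvar (α : ℕ) (κ : Srt)
  | tvar (x : ℕ) (A : Ty)
  | evar (a : ℕ) (κ : Srt)
  | solved (a : ℕ) (κ : Srt) (τ : Ty)
  | eqn (α : ℕ) (τ : Ty)
  | marker (a : ℕ)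
  deriving DecidableEq

/-- Algorithmic contexts, as lists whose head is the rightmost entry:
`Γ, e` is `e :: Γ` and `Γ₀, Γ₁` is `Γ₁ ++ Γ₀`. -/
abbrev ACtx := List CtxEntry

/-- Context application `[Γ]t`: substitute solutions of solved existential
variables and equated universal variables, iteratively. -/
def applyCtx : ACtx → Ty → Ty
  | [], t => t
  | CtxEntry.solved a _ τ :: Γ, t => applyCtx Γ (Ty.substE τ a t)
  | CtxEntry.eqn α τ :: Γ, t => applyCtx Γ (Ty.subst τ α t)
  | CtxEntry.uvar _ _ :: Γ, t => applyCtx Γ t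
  | CtxEntry.tvar _ _ :: Γ, t => applyCtx Γ t
  | CtxEntry.evar _ _ :: Γ, t => applyCtx Γ t
  | CtxEntry.marker _ :: Γ, t => applyCtx Γ t

/-- Algorithmic sorting judgment `Γ ⊢ t : κ`. -/
inductive ASort : ACtx → Ty → Srt → Prop
  | var {Γ α κ} : CtxEntry.uvar α κ ∈ Γ → ASort Γ (Ty.var α) κ
  | evar {Γ a κ} : CtxEntry.evar a κ ∈ Γ → ASort Γ (Ty.evar a) κ
  | solvedEvar {Γ a κ τ} : CtxEntry.solved a κ τ ∈ Γ → ASort Γ (Ty.evar a) κ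
  | unit {Γ} : ASort Γ Ty.unit Srt.star
  | zero {Γ} : ASort Γ Ty.zero Srt.nat
  | succ {Γ t} : ASort Γ t Srt.nat → ASort Γ (Ty.succ t) Srt.nat
  | arrow {Γ A B} : ASort Γ A Srt.star → ASort Γ B Srt.star →
      ASort Γ (Ty.arrow A B) Srt.star
  | sum {Γ A B} : ASort Γ A Srt.star → ASort Γ B Srt.star →
      ASort Γ (Ty.sum A B) Srt.star
  | prod {Γ A B} : ASort Γ A Srt.star → ASort Γ B Srt.star →
      ASort Γ (Ty.prod A B) Srt.star

/-- Well-formedness `Γ ⊢ t = u prop` of propositions (equations over sort ℕ). -/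
inductive APropWF : ACtx → Ty → Ty → Prop
  | eq {Γ t u} : ASort Γ t Srt.nat → ASort Γ u Srt.nat → APropWF Γ t u

/-- Algorithmic type well-formedness `Γ ⊢ A type`. -/
inductive ATyWF : ACtx → Ty → Prop
  | var {Γ α} : CtxEntry.uvar α Srt.star ∈ Γ → ATyWF Γ (Ty.var α)
  | evar {Γ a} : CtxEntry.evar a Srt.star ∈ Γ → ATyWF Γ (Ty.evar a)
  | solvedEvar {Γ a τ} : CtxEntry.solved a Srt.star τ ∈ Γ → ATyWF Γ (Ty.evar a)
  | unit {Γ} : ATyWF Γ Ty.unit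
  | arrow {Γ A B} : ATyWF Γ A → ATyWF Γ B → ATyWF Γ (Ty.arrow A B)
  | sum {Γ A B} : ATyWF Γ A → ATyWF Γ B → ATyWF Γ (Ty.sum A B)
  | prod {Γ A B} : ATyWF Γ A → ATyWF Γ B → ATyWF Γ (Ty.prod A B)
  | all {Γ x κ A} : ATyWF (CtxEntry.uvar x κ :: Γ) A → ATyWF Γ (Ty.all x κ A)
  | ex {Γ x κ A} : ATyWF (CtxEntry.uvar x κ :: Γ) A → ATyWF Γ (Ty.ex x κ A)
  | impl {Γ t u A} : APropWF Γ t u → ATyWF Γ A → ATyWF Γ (Ty.impl t u A)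
  | wth {Γ A t u} : ATyWF Γ A → APropWF Γ t u → ATyWF Γ (Ty.wth A t u)

/-- The variable(s) declared by a context entry (equations and markers
declare nothing). -/
def declOf : CtxEntry → Option ℕ
  | CtxEntry.uvar α _ => some α
  | CtxEntry.tvar x _ => some x
  | CtxEntry.evar a _ => some a
  | CtxEntry.solved a _ _ => some a
  | CtxEntry.eqn _ _ => none
  | CtxEntry.marker _ => none

/-- The names occurring in a context entry (for freshness). -/
def entryNames : CtxEntry → List ℕ
  | CtxEntry.uvar α _ => [α]
  | CtxEntry.tvar x _ => [x]
  | CtxEntry.evar a _ => [a]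
  | CtxEntry.solved a _ _ => [a]
  | CtxEntry.eqn _ _ => []
  | CtxEntry.marker a => [a]

/-- The domain of a context: all declared names. -/
def dom : ACtx → List ℕ
  | [] => []
  | e :: Γ => entryNames e ++ dom Γ

/-- Γ contains an equation for the universal variable α. -/
def hasEqn (Γ : ACtx) (α : ℕ) : Prop :=
  ∃ τ, CtxEntry.eqn α τ ∈ Γ

/-- Context well-formedness `⊢ Γ ctx`. -/
inductive CtxWF : ACtx → Prop
  | nil : CtxWF []
  | uvar {Γ α κ} : CtxWF Γ → α ∉ dom Γ → CtxWF (CtxEntry.uvar α κ :: Γ)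
  | tvar {Γ x A} : CtxWF Γ → x ∉ dom Γ → ATyWF Γ A → CtxWF (CtxEntry.tvar x A :: Γ)
  | evar {Γ a κ} : CtxWF Γ → a ∉ dom Γ → CtxWF (CtxEntry.evar a κ :: Γ)
  | solved {Γ a κ τ} : CtxWF Γ → a ∉ dom Γ → ASort Γ τ κ →
      CtxWF (CtxEntry.solved a κ τ :: Γ)
  | eqn {Γ α κ τ} : CtxWF Γ → CtxEntry.uvar α κ ∈ Γ → ¬ hasEqn Γ α →
      ASort Γ τ κ → CtxWF (CtxEntry.eqn α τ :: Γ)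
  | marker {Γ a} : CtxWF Γ → a ∉ dom Γ → CtxWF (CtxEntry.marker a :: Γ)

/-- Context extension `Γ ⟶ Δ`. -/
inductive CtxExt : ACtx → ACtx → Prop
  | nil : CtxExt [] []
  | tvar {Γ Δ x A A'} : CtxExt Γ Δ → applyCtx Δ A = applyCtx Δ A' →
      CtxExt (CtxEntry.tvar x A :: Γ) (CtxEntry.tvar x A' :: Δ)
  | uvar {Γ Δ α κ} : CtxExt Γ Δ → CtxExt (CtxEntry.uvar α κ :: Γ) (CtxEntry.uvar α κ :: Δ)
  | evar {Γ Δ a κ} : CtxExt Γ Δ → CtxExt (CtxEntry.evar a κ :: Γ) (CtxEntry.evar a κ :: Δ)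
  | solved {Γ Δ a κ t t'} : CtxExt Γ Δ → applyCtx Δ t = applyCtx Δ t' →
      CtxExt (CtxEntry.solved a κ t :: Γ) (CtxEntry.solved a κ t' :: Δ)
  | solve {Γ Δ a κ t} : CtxExt Γ Δ →
      CtxExt (CtxEntry.evar a κ :: Γ) (CtxEntry.solved a κ t :: Δ)
  | eqn {Γ Δ α t t'} : CtxExt Γ Δ → applyCtx Δ t = applyCtx Δ t' →
      CtxExt (CtxEntry.eqn α t :: Γ) (CtxEntry.eqn α t' :: Δ)
  | marker {Γ Δ a} : CtxExt Γ Δ → CtxExt (CtxEntry.marker a :: Γ) (CtxEntry.marker a :: Δ)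
  | add {Γ Δ a κ} : CtxExt Γ Δ → CtxExt Γ (CtxEntry.evar a κ :: Δ)
  | addSolved {Γ Δ a κ t} : CtxExt Γ Δ → CtxExt Γ (CtxEntry.solved a κ t :: Δ)

/-- `u` is declared in `Γ`. -/
def DeclaredIn (Γ : ACtx) (u : ℕ) : Prop :=
  ∃ e ∈ Γ, declOf e = some u

/-- `u` is declared (strictly) to the left of `v` in `Γ`
(recall the head of the list is the rightmost entry). -/
def DeclaredLeftOf (Γ : ACtx) (u v : ℕ) : Prop :=
  ∃ (Γ₃ Γ₂ Γ₁ : ACtx) (e₂ e₁ : CtxEntry),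
    Γ = Γ₃ ++ e₂ :: Γ₂ ++ e₁ :: Γ₁ ∧ declOf e₁ = some u ∧ declOf e₂ = some v

/-- A complete context: every existential variable is solved. -/
def Complete (Ω : ACtx) : Prop :=
  ∀ (a : ℕ) (κ : Srt), CtxEntry.evar a κ ∉ Ω

/-- A soft context: only (solved or unsolved) existential declarations. -/
def Soft (Θ : ACtx) : Prop :=
  ∀ e ∈ Θ, (∃ a κ, e = CtxEntry.evar a κ) ∨ (∃ a κ τ, e = CtxEntry.solved a κ τ)

/-- Entries of declarative contexts. -/
inductive DEntry : Type
  | uvar (α : ℕ) (κ : Srt)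
  | tvar (x : ℕ) (A : Ty)
  deriving DecidableEq

abbrev DCtx := List DEntry

/-- Substitution applied pointwise to a declarative context. -/
def substDCtx (τ : Ty) (α : ℕ) : DCtx → DCtx :=
  List.map fun e =>
    match e with
    | DEntry.uvar β κ => DEntry.uvar β κ
    | DEntry.tvar x A => DEntry.tvar x (Ty.subst τ α A)

/-- Context application `[Ω]Γ` of a (complete) context `Ω` to a context `Γ`
that it extends, producing a declarative context: solutions are substituted,
and existential declarations and markers are dropped. -/
def applyCtxCtx : ACtx → ACtx → DCtx
  | [], _ => []
  | CtxEntry.uvar α κ :: Ω, CtxEntry.uvar _ _ :: Γ =>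
      DEntry.uvar α κ :: applyCtxCtx Ω Γ
  | CtxEntry.tvar x A :: Ω, CtxEntry.tvar _ _ :: Γ =>
      DEntry.tvar x (applyCtx Ω A) :: applyCtxCtx Ω Γ
  | CtxEntry.eqn α τ :: Ω, CtxEntry.eqn _ _ :: Γ =>
      substDCtx (applyCtx Ω τ) α (applyCtxCtx Ω Γ)
  | CtxEntry.marker _ :: Ω, CtxEntry.marker _ :: Γ => applyCtxCtx Ω Γ
  | CtxEntry.solved _ _ _ :: Ω, CtxEntry.solved _ _ _ :: Γ => applyCtxCtx Ω Γ
  | CtxEntry.solved _ _ _ :: Ω, CtxEntry.evar _ _ :: Γ => applyCtxCtx Ω Γ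
  | CtxEntry.solved _ _ _ :: Ω, Γ => applyCtxCtx Ω Γ
  | CtxEntry.evar _ _ :: Ω, Γ => applyCtxCtx Ω Γ
  | _ :: Ω, Γ => applyCtxCtx Ω Γ

/-- Sorting is monotone under context subset. -/
lemma ASort.weaken {Γ Δ : ACtx} {t : Ty} {κ : Srt}
    (hsub : ∀ e ∈ Γ, e ∈ Δ) (h : ASort Γ t κ) : ASort Δ t κ := by
  induction h with
  | var hm => exact ASort.var (hsub _ hm)
  | evar hm => exact ASort.evar (hsub _ hm)
  | solvedEvar hm => exact ASort.solvedEvar (hsub _ hm)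
  | unit => exact ASort.unit
  | zero => exact ASort.zero
  | succ _ ih => exact ASort.succ ih
  | arrow _ _ ih1 ih2 => exact ASort.arrow ih1 ih2
  | sum _ _ ih1 ih2 => exact ASort.sum ih1 ih2
  | prod _ _ ih1 ih2 => exact ASort.prod ih1 ih2

lemma mem_entryNames_of_declOf {e : CtxEntry} {a : ℕ}
    (h : declOf e = some a) : a ∈ entryNames e := by
  cases e <;> simp [declOf, entryNames] at h ⊢ <;> omega

lemma mem_dom_of_decl {Γ : ACtx} {e : CtxEntry} {a : ℕ}
    (he : e ∈ Γ) (h : declOf e = some a) : a ∈ dom Γ := by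
  induction Γ with
  | nil => cases he
  | cons e' Γ ih =>
    rcases List.mem_cons.mp he with rfl | he'
    · exact List.mem_append_left _ (mem_entryNames_of_declOf h)
    · exact List.mem_append_right _ (ih he')

/-- The head entry of a well-formed context declares a fresh name. -/
lemma head_fresh {e : CtxEntry} {Γ : ACtx} {a : ℕ}
    (h : CtxWF (e :: Γ)) (d : declOf e = some a) : a ∉ dom Γ := by
  cases h <;> simp [declOf] at d <;> subst d <;> assumption

/-- In a well-formed context, each name is declared by at most one entry. -/
lemma decl_unique (Δ : ACtx) : CtxWF Δ → ∀ ⦃e₁ e₂ : CtxEntry⦄ ⦃a : ℕ⦄,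
    e₁ ∈ Δ → e₂ ∈ Δ → declOf e₁ = some a → declOf e₂ = some a → e₁ = e₂ := by
  induction Δ with
  | nil => intro _ _ _ _ h1; cases h1
  | cons e Γ ih =>
    intro hΔ e₁ e₂ a h1 h2 d1 d2
    have hΓ : CtxWF Γ := by cases hΔ <;> assumption
    rcases List.mem_cons.mp h1 with rfl | h1' <;>
      rcases List.mem_cons.mp h2 with h2eq | h2'
    · exact h2eq.symm
    · exact absurd (mem_dom_of_decl h2' d2) (head_fresh hΔ d1)
    · subst h2eq; exact absurd (mem_dom_of_decl h1' d1) (head_fresh hΔ d2)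
    · exact ih hΓ h1' h2' d1 d2

/-- Substituting a well-sorted term for an existential variable of the
same sort preserves sorting. -/
lemma sort_substE {Δ : ACtx} {t τ : Ty} {κ κ' : Srt} {a : ℕ}
    (h : ASort Δ t κ) (hτ : ASort Δ τ κ')
    (hu : ∀ κ'', ((CtxEntry.evar a κ'' ∈ Δ) ∨
        (∃ τ'', CtxEntry.solved a κ'' τ'' ∈ Δ)) → κ'' = κ') :
    ASort Δ (Ty.substE τ a t) κ := by
  induction h with
  | var hm => exact ASort.var hm
  | @evar b κ₀ hm =>
    by_cases hb : b = a
    · subst hb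
      have : κ₀ = κ' := hu _ (Or.inl hm)
      subst this
      simpa [Ty.substE] using hτ
    · simpa [Ty.substE, hb] using ASort.evar hm
  | @solvedEvar b κ₀ τ₀ hm =>
    by_cases hb : b = a
    · subst hb
      have : κ₀ = κ' := hu _ (Or.inr ⟨_, hm⟩)
      subst this
      simpa [Ty.substE] using hτ
    · simpa [Ty.substE, hb] using ASort.solvedEvar hm
  | unit => exact ASort.unit
  | zero => exact ASort.zero
  | succ _ ih => exact ASort.succ ih
  | arrow _ _ ih1 ih2 => exact ASort.arrow ih1 ih2
  | sum _ _ ih1 ih2 => exact ASort.sum ih1 ih2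
  | prod _ _ ih1 ih2 => exact ASort.prod ih1 ih2

/-- Substituting a well-sorted term for a universal variable of the
same sort preserves sorting. -/
lemma sort_subst {Δ : ACtx} {t τ : Ty} {κ κ' : Srt} {α : ℕ}
    (h : ASort Δ t κ) (hτ : ASort Δ τ κ')
    (hu : ∀ κ'', CtxEntry.uvar α κ'' ∈ Δ → κ'' = κ') :
    ASort Δ (Ty.subst τ α t) κ := by
  induction h with
  | @var x κ₀ hm =>
    by_cases hx : x = α
    · subst hx
      have : κ₀ = κ' := hu _ hm
      subst this
      simpa [Ty.subst] using hτ
    · simpa [Ty.subst, hx] using ASort.var hm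
  | evar hm => exact ASort.evar hm
  | solvedEvar hm => exact ASort.solvedEvar hm
  | unit => exact ASort.unit
  | zero => exact ASort.zero
  | succ _ ih => exact ASort.succ ih
  | arrow _ _ ih1 ih2 => exact ASort.arrow ih1 ih2
  | sum _ _ ih1 ih2 => exact ASort.sum ih1 ih2
  | prod _ _ ih1 ih2 => exact ASort.prod ih1 ih2

/-- Generalized statement: applying a well-formed subcontext `Γ ⊆ Δ`
preserves sorting under the well-formed ambient context `Δ`. -/
lemma rhs_aux (Γ : ACtx) (hΓ : CtxWF Γ) :
    ∀ (Δ : ACtx), CtxWF Δ → (∀ e ∈ Γ, e ∈ Δ) →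
      ∀ (t : Ty) (κ : Srt), ASort Δ t κ → ASort Δ (applyCtx Γ t) κ := by
  induction hΓ with
  | nil => intro Δ _ _ t κ h; simpa [applyCtx] using h
  | uvar _ _ ih | evar _ _ ih | marker _ _ ih =>
    intro Δ hΔ hsub t κ h
    exact ih Δ hΔ (fun e he => hsub e (List.mem_cons_of_mem _ he)) t κ h
  | tvar _ _ _ ih =>
    intro Δ hΔ hsub t κ h
    exact ih Δ hΔ (fun e he => hsub e (List.mem_cons_of_mem _ he)) t κ h
  | @solved Γ' a κ' τ _ _ hτ ih =>
    intro Δ hΔ hsub t κ h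
    have hsub' : ∀ e ∈ Γ', e ∈ Δ := fun e he => hsub e (List.mem_cons_of_mem _ he)
    have hmem : CtxEntry.solved a κ' τ ∈ Δ := hsub _ List.mem_cons_self
    have hτ' : ASort Δ τ κ' := ASort.weaken hsub' hτ
    have hu : ∀ κ'', ((CtxEntry.evar a κ'' ∈ Δ) ∨
        (∃ τ'', CtxEntry.solved a κ'' τ'' ∈ Δ)) → κ'' = κ' := by
      rintro κ'' (hm | ⟨τ'', hm⟩)
      · exact absurd (decl_unique _ hΔ hm hmem rfl rfl) (by simp)
      · have := decl_unique _ hΔ hm hmem rfl rfl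
        injection this
    exact ih Δ hΔ hsub' _ κ (sort_substE h hτ' hu)
  | @eqn Γ' α κ' τ _ hαmem _ hτ ih =>
    intro Δ hΔ hsub t κ h
    have hsub' : ∀ e ∈ Γ', e ∈ Δ := fun e he => hsub e (List.mem_cons_of_mem _ he)
    have hmem : CtxEntry.uvar α κ' ∈ Δ := hsub' _ hαmem
    have hτ' : ASort Δ τ κ' := ASort.weaken hsub' hτ
    have hu : ∀ κ'', CtxEntry.uvar α κ'' ∈ Δ → κ'' = κ' := by
      intro κ'' hm
      have := decl_unique _ hΔ hm hmem rfl rfl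
      injection this
    exact ih Δ hΔ hsub' _ κ (sort_subst h hτ' hu)

/-- **Right-hand substitution for sorting**: if `Γ ⊢ t : κ` (with `Γ` a
well-formed algorithmic context) then `Γ ⊢ [Γ]t : κ`. -/
theorem rhs_substitution_sorting (Γ : ACtx) (t : Ty) (κ : Srt)
    (hΓ : CtxWF Γ) (h : ASort Γ t κ) :
    ASort Γ (applyCtx Γ t) κ :=
  rhs_aux Γ hΓ Γ hΓ (fun _ he => he) t κ h
end

section
/- Declaration order preservation: if Γ ⟶ Δ and variable u is declared to the left of variable v in Γ, then u is declared to the left of v in Δ. -/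
lemma declaredIn_preserved {Γ Δ : ACtx} (hext : CtxExt Γ Δ) {u : ℕ}
    (h : DeclaredIn Γ u) : DeclaredIn Δ u := by
  induction hext with
  | nil => exact h
  | tvar _ _ ih =>
    obtain ⟨e, he, hd⟩ := h
    rcases List.mem_cons.1 he with rfl | he
    · exact ⟨_, List.mem_cons_self, hd⟩
    · obtain ⟨e', he', hd'⟩ := ih ⟨e, he, hd⟩
      exact ⟨e', List.mem_cons_of_mem _ he', hd'⟩
  | uvar _ ih =>
    obtain ⟨e, he, hd⟩ := h
    rcases List.mem_cons.1 he with rfl | he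
    · exact ⟨_, List.mem_cons_self, hd⟩
    · obtain ⟨e', he', hd'⟩ := ih ⟨e, he, hd⟩
      exact ⟨e', List.mem_cons_of_mem _ he', hd'⟩
  | evar _ ih =>
    obtain ⟨e, he, hd⟩ := h
    rcases List.mem_cons.1 he with rfl | he
    · exact ⟨_, List.mem_cons_self, hd⟩
    · obtain ⟨e', he', hd'⟩ := ih ⟨e, he, hd⟩
      exact ⟨e', List.mem_cons_of_mem _ he', hd'⟩
  | solved _ _ ih =>
    obtain ⟨e, he, hd⟩ := h
    rcases List.mem_cons.1 he with rfl | he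
    · exact ⟨_, List.mem_cons_self, hd⟩
    · obtain ⟨e', he', hd'⟩ := ih ⟨e, he, hd⟩
      exact ⟨e', List.mem_cons_of_mem _ he', hd'⟩
  | solve _ ih =>
    obtain ⟨e, he, hd⟩ := h
    rcases List.mem_cons.1 he with rfl | he
    · exact ⟨_, List.mem_cons_self, hd⟩
    · obtain ⟨e', he', hd'⟩ := ih ⟨e, he, hd⟩
      exact ⟨e', List.mem_cons_of_mem _ he', hd'⟩
  | eqn _ _ ih =>
    obtain ⟨e, he, hd⟩ := h
    rcases List.mem_cons.1 he with rfl | he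
    · exact ⟨_, List.mem_cons_self, hd⟩
    · obtain ⟨e', he', hd'⟩ := ih ⟨e, he, hd⟩
      exact ⟨e', List.mem_cons_of_mem _ he', hd'⟩
  | marker _ ih =>
    obtain ⟨e, he, hd⟩ := h
    rcases List.mem_cons.1 he with rfl | he
    · exact ⟨_, List.mem_cons_self, hd⟩
    · obtain ⟨e', he', hd'⟩ := ih ⟨e, he, hd⟩
      exact ⟨e', List.mem_cons_of_mem _ he', hd'⟩
  | add _ ih =>
    obtain ⟨e', he', hd'⟩ := ih h
    exact ⟨e', List.mem_cons_of_mem _ he', hd'⟩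
  | addSolved _ ih =>
    obtain ⟨e', he', hd'⟩ := ih h
    exact ⟨e', List.mem_cons_of_mem _ he', hd'⟩

/-- Alternate characterization of `DeclaredLeftOf`. -/
lemma declaredLeftOf_iff (Γ : ACtx) (u v : ℕ) :
    DeclaredLeftOf Γ u v ↔
      ∃ (Γ₃ rest : ACtx) (e₂ : CtxEntry),
        Γ = Γ₃ ++ e₂ :: rest ∧ declOf e₂ = some v ∧ DeclaredIn rest u := by
  constructor
  · rintro ⟨Γ₃, Γ₂, Γ₁, e₂, e₁, rfl, h₁, h₂⟩
    exact ⟨Γ₃, Γ₂ ++ e₁ :: Γ₁, e₂, by simp, h₂,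
      ⟨e₁, by simp, h₁⟩⟩
  · rintro ⟨Γ₃, rest, e₂, rfl, hv, e₁, he₁, hu⟩
    obtain ⟨s, t, rfl⟩ := List.append_of_mem he₁
    exact ⟨Γ₃, s, t, e₂, e₁, by simp, hu, hv⟩

lemma dlo_step {Γ Δ : ACtx} {e e' : CtxEntry} {u v : ℕ}
    (hext : CtxExt Γ Δ) (heq : declOf e = declOf e')
    (ih : DeclaredLeftOf Γ u v → DeclaredLeftOf Δ u v)
    (h : DeclaredLeftOf (e :: Γ) u v) : DeclaredLeftOf (e' :: Δ) u v := by
  rw [declaredLeftOf_iff] at h ⊢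
  obtain ⟨Γ₃, rest, e₂, hsplit, hv, hu⟩ := h
  cases Γ₃ with
  | nil =>
    simp only [List.nil_append, List.cons.injEq] at hsplit
    obtain ⟨rfl, rfl⟩ := hsplit
    exact ⟨[], Δ, e', rfl, heq ▸ hv, declaredIn_preserved hext hu⟩
  | cons f Γ₃' =>
    simp only [List.cons_append, List.cons.injEq] at hsplit
    obtain ⟨rfl, rfl⟩ := hsplit
    have := ih ((declaredLeftOf_iff _ _ _).2 ⟨Γ₃', rest, e₂, rfl, hv, hu⟩)
    rw [declaredLeftOf_iff] at this
    obtain ⟨Δ₃, rest', e₂', rfl, hv', hu'⟩ := this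
    exact ⟨e' :: Δ₃, rest', e₂', rfl, hv', hu'⟩

lemma dlo_add {Δ : ACtx} {e : CtxEntry} {u v : ℕ}
    (h : DeclaredLeftOf Δ u v) : DeclaredLeftOf (e :: Δ) u v := by
  obtain ⟨Γ₃, Γ₂, Γ₁, e₂, e₁, rfl, h₁, h₂⟩ := h
  exact ⟨e :: Γ₃, Γ₂, Γ₁, e₂, e₁, rfl, h₁, h₂⟩

/-- **Declaration order preservation**: if `Γ ⟶ Δ` and `u` is declared to the
left of `v` in `Γ`, then `u` is declared to the left of `v` in `Δ`. -/
theorem declaration_order_preservation (Γ Δ : ACtx) (u v : ℕ)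
    (hext : CtxExt Γ Δ) (h : DeclaredLeftOf Γ u v) :
    DeclaredLeftOf Δ u v := by
  induction hext with
  | nil => exact h
  | tvar hext _ ih => exact dlo_step hext (by rfl) ih h
  | uvar hext ih => exact dlo_step hext (by rfl) ih h
  | evar hext ih => exact dlo_step hext (by rfl) ih h
  | solved hext _ ih => exact dlo_step hext (by rfl) ih h
  | solve hext ih => exact dlo_step hext (by rfl) ih h
  | eqn hext _ ih => exact dlo_step hext (by rfl) ih h
  | marker hext ih => exact dlo_step hext (by rfl) ih h
  | add _ ih => exact dlo_add (ih h)
  | addSolved _ ih => exact dlo_add (ih h)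
end

section
/- Deep existential variable introduction: (i) if Γ₀, Γ₁ is well-formed and α̂ is not declared in it, then Γ₀, Γ₁ ⟶ Γ₀, α̂:κ, Γ₁; (ii) if Γ₀, α̂:κ, Γ₁ is well-formed and Γ₀ ⊢ t : κ, then Γ₀, α̂:κ, Γ₁ ⟶ Γ₀, (α̂:κ = t), Γ₁; (iii) combining both, Γ₀, Γ₁ ⟶ Γ₀, (α̂:κ = t), Γ₁. -/
theorem CtxExt.refl : ∀ Γ : ACtx, CtxExt Γ Γ
  | [] => .nil
  | CtxEntry.uvar _ _ :: Γ => .uvar (CtxExt.refl Γ)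
  | CtxEntry.tvar _ _ :: Γ => .tvar (CtxExt.refl Γ) rfl
  | CtxEntry.evar _ _ :: Γ => .evar (CtxExt.refl Γ)
  | CtxEntry.solved _ _ _ :: Γ => .solved (CtxExt.refl Γ) rfl
  | CtxEntry.eqn _ _ :: Γ => .eqn (CtxExt.refl Γ) rfl
  | CtxEntry.marker _ :: Γ => .marker (CtxExt.refl Γ)

theorem CtxExt.cons {Γ Δ : ACtx} (e : CtxEntry) (h : CtxExt Γ Δ) :
    CtxExt (e :: Γ) (e :: Δ) := by
  cases e with
  | uvar => exact .uvar h
  | tvar => exact .tvar h rfl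
  | evar => exact .evar h
  | solved => exact .solved h rfl
  | eqn => exact .eqn h rfl
  | marker => exact .marker h

theorem CtxExt.append (Γ₁ : ACtx) {Γ Δ : ACtx} (h : CtxExt Γ Δ) :
    CtxExt (Γ₁ ++ Γ) (Γ₁ ++ Δ) := by
  induction Γ₁ with
  | nil => exact h
  | cons e Γ₁ ih => exact ih.cons e

/-- **Deep existential variable introduction**:
(i) a fresh unsolved existential may be inserted in the middle of a
well-formed context; (ii) an unsolved existential may be solved in place by a
term well-sorted under the prefix to its left; (iii) combining both, a fresh
solved existential may be inserted in the middle. -/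
theorem deep_evar_introduction (Γ₀ Γ₁ : ACtx) (a : ℕ) (κ : Srt) (t : Ty) :
    (CtxWF (Γ₁ ++ Γ₀) → a ∉ dom (Γ₁ ++ Γ₀) →
      CtxExt (Γ₁ ++ Γ₀) (Γ₁ ++ CtxEntry.evar a κ :: Γ₀)) ∧
    (CtxWF (Γ₁ ++ CtxEntry.evar a κ :: Γ₀) → ASort Γ₀ t κ →
      CtxExt (Γ₁ ++ CtxEntry.evar a κ :: Γ₀) (Γ₁ ++ CtxEntry.solved a κ t :: Γ₀)) ∧
    (CtxWF (Γ₁ ++ Γ₀) → a ∉ dom (Γ₁ ++ Γ₀) → ASort Γ₀ t κ →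
      CtxExt (Γ₁ ++ Γ₀) (Γ₁ ++ CtxEntry.solved a κ t :: Γ₀)) := by
  refine ⟨fun _ _ => ?_, fun _ _ => ?_, fun _ _ _ => ?_⟩
  · exact CtxExt.append Γ₁ (.add (CtxExt.refl Γ₀))
  · exact CtxExt.append Γ₁ (.solve (CtxExt.refl Γ₀))
  · exact CtxExt.append Γ₁ (.addSolved (CtxExt.refl Γ₀))
end

section
/- Confluence of completion: if Δ₁ ⟶ Ω and Δ₂ ⟶ Ω where Ω is a complete context, then [Ω]Δ₁ = [Ω]Δ₂. -/
/-- Canonical application of a context to itself (ignoring the argument). -/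
def canonApp : ACtx → DCtx
  | [] => []
  | CtxEntry.uvar α κ :: Ω => DEntry.uvar α κ :: canonApp Ω
  | CtxEntry.tvar x A :: Ω => DEntry.tvar x (applyCtx Ω A) :: canonApp Ω
  | CtxEntry.eqn α τ :: Ω => substDCtx (applyCtx Ω τ) α (canonApp Ω)
  | CtxEntry.marker _ :: Ω => canonApp Ω
  | CtxEntry.solved _ _ _ :: Ω => canonApp Ω
  | CtxEntry.evar _ _ :: Ω => canonApp Ω

/-- Every entry of `S` is a solved existential. -/
def AllSolved (S : ACtx) : Prop :=
  ∀ e ∈ S, ∃ a κ t, e = CtxEntry.solved a κ t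

/-- The head of `Γ` (if any) is a rigid entry (not evar/solved). -/
def HeadRigid : ACtx → Prop
  | [] => True
  | CtxEntry.uvar _ _ :: _ => True
  | CtxEntry.tvar _ _ :: _ => True
  | CtxEntry.eqn _ _ :: _ => True
  | CtxEntry.marker _ :: _ => True
  | _ => False

theorem strip_solved (S : ACtx) (hS : AllSolved S) (Δ Γ : ACtx)
    (hΓ : HeadRigid Γ) : applyCtxCtx (S ++ Δ) Γ = applyCtxCtx Δ Γ := by
  induction S with
  | nil => rfl
  | cons s S ih =>
    obtain ⟨a, κ, t, rfl⟩ := hS s (List.mem_cons_self)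
    have hS' : AllSolved S := fun e he => hS e (List.mem_cons_of_mem _ he)
    cases Γ with
    | nil => simpa [applyCtxCtx] using ih hS'
    | cons e Γ' =>
      cases e <;> simp [HeadRigid] at hΓ <;> simpa [applyCtxCtx] using ih hS'

theorem applyCtxCtx_ext_gen {Γ Δ : ACtx} (h : CtxExt Γ Δ) :
    ∀ S : ACtx, AllSolved S → Complete Δ →
      applyCtxCtx (S ++ Δ) Γ = canonApp Δ := by
  induction h with
  | nil =>
    intro S hS _
    rw [strip_solved S hS _ _ (by trivial)]; rfl
  | tvar h _ ih =>
    intro S hS hC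
    rw [strip_solved S hS _ _ (by trivial)]
    have hC' : Complete _ := fun a κ h' => hC a κ (List.mem_cons_of_mem _ h')
    have h0 := ih [] (by intro e he; cases he) hC'
    simp only [List.nil_append] at h0
    simp [applyCtxCtx, canonApp, h0]
  | uvar h ih =>
    intro S hS hC
    rw [strip_solved S hS _ _ (by trivial)]
    have hC' : Complete _ := fun a κ h' => hC a κ (List.mem_cons_of_mem _ h')
    have h0 := ih [] (by intro e he; cases he) hC'
    simp only [List.nil_append] at h0
    simp [applyCtxCtx, canonApp, h0]
  | eqn h _ ih =>
    intro S hS hC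
    rw [strip_solved S hS _ _ (by trivial)]
    have hC' : Complete _ := fun a κ h' => hC a κ (List.mem_cons_of_mem _ h')
    have h0 := ih [] (by intro e he; cases he) hC'
    simp only [List.nil_append] at h0
    simp [applyCtxCtx, canonApp, h0]
  | marker h ih =>
    intro S hS hC
    rw [strip_solved S hS _ _ (by trivial)]
    have hC' : Complete _ := fun a κ h' => hC a κ (List.mem_cons_of_mem _ h')
    have h0 := ih [] (by intro e he; cases he) hC'
    simp only [List.nil_append] at h0
    simp [applyCtxCtx, canonApp, h0]
  | evar h ih =>
    intro S hS hC
    exact absurd (List.mem_cons_self) (hC _ _)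
  | add h ih =>
    intro S hS hC
    exact absurd (List.mem_cons_self) (hC _ _)
  | @solved Γ' Δ' a κ t t' h _ ih =>
    intro S hS hC
    have hC' : Complete Δ' := fun b κ' h' => hC b κ' (List.mem_cons_of_mem _ h')
    cases S with
    | nil =>
      simpa [applyCtxCtx, canonApp] using ih [] (by intro e he; cases he) hC'
    | cons s S' =>
      obtain ⟨b, κ', u, rfl⟩ := hS s (List.mem_cons_self)
      have hS' : AllSolved (S' ++ [CtxEntry.solved a κ t']) := by
        intro e he
        rcases List.mem_append.1 he with h' | h'
        · exact hS e (List.mem_cons_of_mem _ h')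
        · simp at h'; exact ⟨a, κ, t', h'⟩
      have := ih (S' ++ [CtxEntry.solved a κ t']) hS' hC'
      simp only [List.append_assoc, List.singleton_append] at this
      simpa [applyCtxCtx, canonApp] using this
  | @solve Γ' Δ' a κ t h ih =>
    intro S hS hC
    have hC' : Complete Δ' := fun b κ' h' => hC b κ' (List.mem_cons_of_mem _ h')
    cases S with
    | nil =>
      simpa [applyCtxCtx, canonApp] using ih [] (by intro e he; cases he) hC'
    | cons s S' =>
      obtain ⟨b, κ', u, rfl⟩ := hS s (List.mem_cons_self)
      have hS' : AllSolved (S' ++ [CtxEntry.solved a κ t]) := by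
        intro e he
        rcases List.mem_append.1 he with h' | h'
        · exact hS e (List.mem_cons_of_mem _ h')
        · simp at h'; exact ⟨a, κ, t, h'⟩
      have := ih (S' ++ [CtxEntry.solved a κ t]) hS' hC'
      simp only [List.append_assoc, List.singleton_append] at this
      simpa [applyCtxCtx, canonApp] using this
  | @addSolved Γ' Δ' a κ t h ih =>
    intro S hS hC
    have hC' : Complete Δ' := fun b κ' h' => hC b κ' (List.mem_cons_of_mem _ h')
    have hS' : AllSolved (S ++ [CtxEntry.solved a κ t]) := by
      intro e he
      rcases List.mem_append.1 he with h' | h'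
      · exact hS e h'
      · simp at h'; exact ⟨a, κ, t, h'⟩
    have := ih (S ++ [CtxEntry.solved a κ t]) hS' hC'
    simp only [List.append_assoc, List.singleton_append] at this
    simpa [canonApp] using this

theorem applyCtxCtx_ext {Γ Ω : ACtx} (hΩ : Complete Ω) (h : CtxExt Γ Ω) :
    applyCtxCtx Ω Γ = canonApp Ω :=
  applyCtxCtx_ext_gen h [] (by intro e he; cases he) hΩ

/-- **Confluence of completion**: if `Δ₁ ⟶ Ω` and `Δ₂ ⟶ Ω` where `Ω` is a
complete context, then `[Ω]Δ₁ = [Ω]Δ₂`. -/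
theorem completion_confluence (Δ₁ Δ₂ Ω : ACtx) (hΩ : Complete Ω)
    (h₁ : CtxExt Δ₁ Ω) (h₂ : CtxExt Δ₂ Ω) :
    applyCtxCtx Ω Δ₁ = applyCtxCtx Ω Δ₂ := by
  rw [applyCtxCtx_ext hΩ h₁, applyCtxCtx_ext hΩ h₂]
end

section
/- Softness goes away: if Δ, Θ ⟶ Ω, Ω_Z where Δ ⟶ Ω and Θ is soft (consists only of existential declarations, solved or unsolved), then [Ω, Ω_Z](Δ, Θ) = [Ω]Δ. -/
namespace SoftAux

/-- Rigid entries: everything except existential declarations (solved or not). -/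
def rigidB : CtxEntry → Bool
  | CtxEntry.evar _ _ => false
  | CtxEntry.solved _ _ _ => false
  | _ => true

lemma countP_ext {Γ Δ : ACtx} (h : CtxExt Γ Δ) :
    Γ.countP rigidB = Δ.countP rigidB := by
  induction h <;> simp_all [List.countP_cons, rigidB]

lemma soft_nil : Soft [] := fun e he => absurd he List.not_mem_nil

lemma soft_snoc {S : ACtx} (hS : Soft S) {e : CtxEntry}
    (he : (∃ a κ, e = CtxEntry.evar a κ) ∨ (∃ a κ τ, e = CtxEntry.solved a κ τ)) :
    Soft (S ++ [e]) := by
  intro x hx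
  rcases List.mem_append.1 hx with h | h
  · exact hS x h
  · simp only [List.mem_singleton] at h; subst h; exact he

lemma solved_skip (a : ℕ) (κ : Srt) (τ : Ty) (Ω Γ : ACtx)
    (h : ∀ e ∈ Γ, rigidB e = true) :
    applyCtxCtx (CtxEntry.solved a κ τ :: Ω) Γ = applyCtxCtx Ω Γ := by
  cases Γ with
  | nil => rfl
  | cons e Γ₀ =>
    have he := h e List.mem_cons_self
    cases e <;> first | rfl | simp [rigidB] at he

lemma skip_list (ΩZ Ω L : ACtx)
    (hZ : ∀ e ∈ ΩZ, ∃ a κ τ, e = CtxEntry.solved a κ τ)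
    (hL : ∀ e ∈ L, rigidB e = true) :
    applyCtxCtx (ΩZ ++ Ω) L = applyCtxCtx Ω L := by
  induction ΩZ with
  | nil => rfl
  | cons e Z ih =>
    obtain ⟨a, κ, τ, rfl⟩ := hZ e List.mem_cons_self
    rw [List.cons_append, solved_skip _ _ _ _ _ hL,
      ih (fun e he => hZ e (List.mem_cons_of_mem _ he))]

lemma ext_inv_nil {X : ACtx} (h : CtxExt X []) : X = [] := by cases h; rfl

lemma ext_inv_uvar {X O : ACtx} {α κ} (h : CtxExt X (CtxEntry.uvar α κ :: O)) :
    ∃ X₀, X = CtxEntry.uvar α κ :: X₀ ∧ CtxExt X₀ O := by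
  cases h; exact ⟨_, rfl, by assumption⟩

lemma ext_inv_tvar {X O : ACtx} {x A} (h : CtxExt X (CtxEntry.tvar x A :: O)) :
    ∃ X₀ A', X = CtxEntry.tvar x A' :: X₀ ∧ CtxExt X₀ O := by
  cases h; exact ⟨_, _, rfl, by assumption⟩

lemma ext_inv_eqn {X O : ACtx} {α τ} (h : CtxExt X (CtxEntry.eqn α τ :: O)) :
    ∃ X₀ τ', X = CtxEntry.eqn α τ' :: X₀ ∧ CtxExt X₀ O := by
  cases h; exact ⟨_, _, rfl, by assumption⟩

lemma ext_inv_marker {X O : ACtx} {a} (h : CtxExt X (CtxEntry.marker a :: O)) :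
    ∃ X₀, X = CtxEntry.marker a :: X₀ ∧ CtxExt X₀ O := by
  cases h; exact ⟨_, rfl, by assumption⟩

lemma ext_inv_solved {X O : ACtx} {a κ τ} (h : CtxExt X (CtxEntry.solved a κ τ :: O)) :
    (∃ X₀ τ', X = CtxEntry.solved a κ τ' :: X₀ ∧ CtxExt X₀ O) ∨
    (∃ X₀, X = CtxEntry.evar a κ :: X₀ ∧ CtxExt X₀ O) ∨
    CtxExt X O := by
  cases h with
  | solved h _ => exact Or.inl ⟨_, _, rfl, h⟩
  | solve h => exact Or.inr (Or.inl ⟨_, rfl, h⟩)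
  | addSolved h => exact Or.inr (Or.inr h)

lemma step_helper (a : ℕ) (κ : Srt) (τ : Ty) (O₀ S G : ACtx)
    (hS : Soft S) (hext : CtxExt (S ++ G) O₀) :
    ∃ S' G', Soft S' ∧ CtxExt (S' ++ G') O₀ ∧
      applyCtxCtx (CtxEntry.solved a κ τ :: O₀) G = applyCtxCtx O₀ G' ∧
      G.filter rigidB = G'.filter rigidB := by
  cases G with
  | nil => exact ⟨S, [], hS, by simpa using hext, rfl, rfl⟩
  | cons g G₀ =>
    cases g with
    | evar b κ' =>
      refine ⟨S ++ [CtxEntry.evar b κ'], G₀, soft_snoc hS (Or.inl ⟨_, _, rfl⟩),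
        by simpa [List.append_assoc] using hext, rfl, by simp [rigidB]⟩
    | solved b κ' τ' =>
      refine ⟨S ++ [CtxEntry.solved b κ' τ'], G₀, soft_snoc hS (Or.inr ⟨_, _, _, rfl⟩),
        by simpa [List.append_assoc] using hext, rfl, by simp [rigidB]⟩
    | uvar α κ' => exact ⟨S, _, hS, hext, rfl, rfl⟩
    | tvar x A => exact ⟨S, _, hS, hext, rfl, rfl⟩
    | eqn α t => exact ⟨S, _, hS, hext, rfl, rfl⟩
    | marker b => exact ⟨S, _, hS, hext, rfl, rfl⟩

lemma main (O : ACtx) : ∀ S G : ACtx, Complete O → Soft S → CtxExt (S ++ G) O →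
    applyCtxCtx O G = applyCtxCtx O (G.filter rigidB) := by
  induction O with
  | nil =>
    intro S G _ _ h
    have hSG := ext_inv_nil h
    have hG : G = [] := (List.append_eq_nil_iff.mp hSG).2
    subst hG; rfl
  | cons e O₀ ih =>
    intro S G hc hS h
    have hc₀ : Complete O₀ := fun a κ hm => hc a κ (List.mem_cons_of_mem _ hm)
    cases e with
    | uvar α κ =>
      obtain ⟨X₀, hX, hext⟩ := ext_inv_uvar h
      cases S with
      | cons s S₀ =>
        exfalso
        rcases hS s List.mem_cons_self with ⟨a, κ', hs⟩ | ⟨a, κ', τ', hs⟩ <;>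
          (subst hs; simp at hX)
      | nil =>
        simp only [List.nil_append] at hX; subst hX
        simp only [List.filter, rigidB]
        show DEntry.uvar α κ :: applyCtxCtx O₀ X₀
          = DEntry.uvar α κ :: applyCtxCtx O₀ (X₀.filter rigidB)
        exact congrArg _ (ih [] X₀ hc₀ soft_nil (by simpa using hext))
    | tvar x A =>
      obtain ⟨X₀, A', hX, hext⟩ := ext_inv_tvar h
      cases S with
      | cons s S₀ =>
        exfalso
        rcases hS s List.mem_cons_self with ⟨a, κ', hs⟩ | ⟨a, κ', τ', hs⟩ <;>
          (subst hs; simp at hX)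
      | nil =>
        simp only [List.nil_append] at hX; subst hX
        simp only [List.filter, rigidB]
        show DEntry.tvar x (applyCtx O₀ A) :: applyCtxCtx O₀ X₀
          = DEntry.tvar x (applyCtx O₀ A) :: applyCtxCtx O₀ (X₀.filter rigidB)
        exact congrArg _ (ih [] X₀ hc₀ soft_nil (by simpa using hext))
    | eqn α t =>
      obtain ⟨X₀, τ', hX, hext⟩ := ext_inv_eqn h
      cases S with
      | cons s S₀ =>
        exfalso
        rcases hS s List.mem_cons_self with ⟨a, κ', hs⟩ | ⟨a, κ', τ'', hs⟩ <;>
          (subst hs; simp at hX)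
      | nil =>
        simp only [List.nil_append] at hX; subst hX
        simp only [List.filter, rigidB]
        show substDCtx (applyCtx O₀ t) α (applyCtxCtx O₀ X₀)
          = substDCtx (applyCtx O₀ t) α (applyCtxCtx O₀ (X₀.filter rigidB))
        exact congrArg _ (ih [] X₀ hc₀ soft_nil (by simpa using hext))
    | marker b =>
      obtain ⟨X₀, hX, hext⟩ := ext_inv_marker h
      cases S with
      | cons s S₀ =>
        exfalso
        rcases hS s List.mem_cons_self with ⟨a, κ', hs⟩ | ⟨a, κ', τ', hs⟩ <;>
          (subst hs; simp at hX)
      | nil =>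
        simp only [List.nil_append] at hX; subst hX
        simp only [List.filter, rigidB]
        show applyCtxCtx O₀ X₀ = applyCtxCtx O₀ (X₀.filter rigidB)
        exact ih [] X₀ hc₀ soft_nil (by simpa using hext)
    | evar b κ' =>
      exact absurd List.mem_cons_self (hc b κ')
    | solved a κ τ =>
      have key : ∃ S' : ACtx, Soft S' ∧ CtxExt (S' ++ G) O₀ ∨ True := ⟨[], Or.inr trivial⟩
      -- obtain a uniform stepping
      have hstep : ∃ S' G', Soft S' ∧ CtxExt (S' ++ G') O₀ ∧
          applyCtxCtx (CtxEntry.solved a κ τ :: O₀) G = applyCtxCtx O₀ G' ∧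
          G.filter rigidB = G'.filter rigidB := by
        rcases ext_inv_solved h with ⟨X₀, τ', hX, hext⟩ | ⟨X₀, hX, hext⟩ | hext
        · cases S with
          | nil =>
            simp only [List.nil_append] at hX; subst hX
            exact ⟨[], X₀, soft_nil, by simpa using hext, rfl, by simp [rigidB]⟩
          | cons s S₀ =>
            have hs : s = CtxEntry.solved a κ τ' ∧ S₀ ++ G = X₀ := by
              constructor <;> [exact (List.cons.injEq _ _ _ _ ▸ hX).1;
                exact (List.cons.injEq _ _ _ _ ▸ hX).2]
            obtain ⟨hs1, hs2⟩ := hs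
            have hS₀ : Soft S₀ := fun e he => hS e (List.mem_cons_of_mem _ he)
            exact step_helper a κ τ O₀ S₀ G hS₀ (hs2 ▸ hext)
        · cases S with
          | nil =>
            simp only [List.nil_append] at hX; subst hX
            exact ⟨[], X₀, soft_nil, by simpa using hext, rfl, by simp [rigidB]⟩
          | cons s S₀ =>
            have hs : s = CtxEntry.evar a κ ∧ S₀ ++ G = X₀ := by
              constructor <;> [exact (List.cons.injEq _ _ _ _ ▸ hX).1;
                exact (List.cons.injEq _ _ _ _ ▸ hX).2]
            obtain ⟨hs1, hs2⟩ := hs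
            have hS₀ : Soft S₀ := fun e he => hS e (List.mem_cons_of_mem _ he)
            exact step_helper a κ τ O₀ S₀ G hS₀ (hs2 ▸ hext)
        · exact step_helper a κ τ O₀ S G hS hext
      obtain ⟨S', G', hS', hext', happ, hfil⟩ := hstep
      rw [happ, solved_skip a κ τ O₀ (G.filter rigidB) (fun e he => List.of_mem_filter he),
        hfil]
      exact ih S' G' hc₀ hS' hext'

end SoftAux

/-- **Softness goes away**: if `Δ, Θ ⟶ Ω, Ω_Z` where `Δ ⟶ Ω` and `Θ` is soft
(only existential declarations, solved or unsolved), then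
`[Ω, Ω_Z](Δ, Θ) = [Ω]Δ`. -/
theorem softness_goes_away (Δ Θ Ω ΩZ : ACtx)
    (hcomp : Complete (ΩZ ++ Ω)) (hsoft : Soft Θ)
    (h₁ : CtxExt (Θ ++ Δ) (ΩZ ++ Ω)) (h₂ : CtxExt Δ Ω) :
    applyCtxCtx (ΩZ ++ Ω) (Θ ++ Δ) = applyCtxCtx Ω Δ := by
  classical
  have hcΩ : Complete Ω := fun a κ hm => hcomp a κ (List.mem_append_right _ hm)
  -- counting: ΩZ has no rigid entries
  have hΘ0 : Θ.countP SoftAux.rigidB = 0 := by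
    refine List.countP_eq_zero.2 (fun e he => ?_)
    rcases hsoft e he with ⟨a, κ, rfl⟩ | ⟨a, κ, τ, rfl⟩ <;> simp [SoftAux.rigidB]
  have hc1 := SoftAux.countP_ext h₁
  have hc2 := SoftAux.countP_ext h₂
  rw [List.countP_append, List.countP_append, hΘ0, hc2] at hc1
  have hZ0 : ΩZ.countP SoftAux.rigidB = 0 := by omega
  have hZsolved : ∀ e ∈ ΩZ, ∃ a κ τ, e = CtxEntry.solved a κ τ := by
    intro e he
    have hr : SoftAux.rigidB e = false := Bool.eq_false_iff.2 (List.countP_eq_zero.1 hZ0 e he)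
    cases e with
    | solved a κ τ => exact ⟨a, κ, τ, rfl⟩
    | evar a κ => exact absurd (List.mem_append_left _ he) (hcomp a κ)
    | uvar _ _ => simp [SoftAux.rigidB] at hr
    | tvar _ _ => simp [SoftAux.rigidB] at hr
    | eqn _ _ => simp [SoftAux.rigidB] at hr
    | marker _ => simp [SoftAux.rigidB] at hr
  have hΘfil : Θ.filter SoftAux.rigidB = [] := by
    refine List.filter_eq_nil_iff.2 (fun e he => ?_)
    rcases hsoft e he with ⟨a, κ, rfl⟩ | ⟨a, κ, τ, rfl⟩ <;> simp [SoftAux.rigidB]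
  have e1 := SoftAux.main (ΩZ ++ Ω) [] (Θ ++ Δ) hcomp SoftAux.soft_nil (by simpa using h₁)
  have e2 := SoftAux.main Ω [] Δ hcΩ SoftAux.soft_nil (by simpa using h₂)
  rw [e1, e2, List.filter_append, hΘfil, List.nil_append]
  exact SoftAux.skip_list ΩZ Ω (Δ.filter SoftAux.rigidB) hZsolved
    (fun e he => List.of_mem_filter he)
end
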